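/- Let Σ be an alphabet containing at least the three distinct symbols 0, 1, 2, and let x, y be words over Σ. If x is a subword of y0y, of y1y, and of y2y, then x is a subword of y. -/

import Mathlib

/-- Number of (possibly overlapping) occurrences of `x` as a contiguous
subword (factor) of `z`. -/
def occCount {α : Type*} [DecidableEq α] (x z : List α) : ℕ :=
  ((List.range (z.length + 1)).filter (fun i => decide (x <+: z.drop i))).length

/-- `wpow w n` is the word `w` concatenated with itself `n` times. -/
def wpow {α : Type*} (w : List α) (n : ℕ) : List α := (List.replicate n w).flatten

/-- `z` is `y`-bordered: `z ≠ y` and `y` is both a prefix and a suffix of `z`. -/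
def IsBordered {α : Type*} (y z : List α) : Prop := z ≠ y ∧ y <+: z ∧ y <:+ z

/-- `x` is interlaced by `y`: `y` is a subword (factor) of every `x`-bordered word. -/
def InterlacedBy {α : Type*} (x y : List α) : Prop :=
  ∀ z : List α, IsBordered x z → y <:+: z

namespace Stmt9Aux
open List

variable {α : Type}

def Cross (x y : List α) (k : ℕ) : Prop :=
  k < x.length ∧ x.take k <:+ y ∧ x.drop (k+1) <+: y

lemma suffix_of_suffix_length_le {l₁ l₂ l₃ : List α} (h₁ : l₁ <:+ l₃) (h₂ : l₂ <:+ l₃)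
    (h : l₁.length ≤ l₂.length) : l₁ <:+ l₂ := by
  rw [← List.reverse_prefix] at h₁ h₂ ⊢
  exact List.prefix_of_prefix_length_le h₁ h₂ (by simpa using h)

lemma crossing (d : α) (x y : List α) (h : x <:+: y ++ [d] ++ y) (hnot : ¬ x <:+: y) :
    ∃ k, Cross x y k ∧ x[k]? = some d := by
  obtain ⟨s, t, hst⟩ := h
  set n := y.length with hn
  by_cases h1 : s.length + x.length ≤ n
  · exfalso; apply hnot
    have hp : s ++ x <+: y ++ [d] ++ y := ⟨t, by rw [← hst]⟩
    have hy : y <+: y ++ [d] ++ y := by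
      rw [List.append_assoc]; exact List.prefix_append _ _
    have := List.prefix_of_prefix_length_le hp hy (by simpa using h1)
    obtain ⟨t', ht'⟩ := this
    exact ⟨s, t', by simpa [List.append_assoc] using ht'⟩
  by_cases h2 : n + 1 ≤ s.length
  · exfalso; apply hnot
    have hp : y ++ [d] <+: s := by
      have hs : s <+: y ++ [d] ++ y := ⟨x ++ t, by simpa [List.append_assoc] using hst⟩
      have hy : y ++ [d] <+: y ++ [d] ++ y := List.prefix_append _ _
      exact List.prefix_of_prefix_length_le hy hs (by simp; omega)
    obtain ⟨s', hs'⟩ := hp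
    refine ⟨s', t, ?_⟩
    have : (y ++ [d]) ++ (s' ++ x ++ t) = (y ++ [d]) ++ y := by
      rw [← hst, ← hs']; simp [List.append_assoc]
    exact List.append_cancel_left this
  · push_neg at h1 h2
    have hk : n - s.length < x.length := by omega
    refine ⟨n - s.length, ⟨hk, ?_, ?_⟩, ?_⟩
    · -- take part
      refine ⟨s, ?_⟩
      have := congrArg (List.take n) hst
      rw [show n = s.length + (n - s.length) by omega] at this
      rw [List.append_assoc, List.take_append] at this
      rw [List.take_append_of_le_length (by omega)] at this
      rw [show take (s.length + (n - s.length)) s = s from List.take_of_length_le (by omega),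
        Nat.add_sub_cancel_left] at this
      rw [this]
      rw [show s.length + (n - s.length) = n by omega, List.append_assoc,
        List.take_left' hn.symm]
    · -- drop part
      refine ⟨t, ?_⟩
      have := congrArg (List.drop (n+1)) hst
      rw [show n + 1 = s.length + (n - s.length + 1) by omega] at this
      rw [List.append_assoc, List.drop_append] at this
      rw [List.drop_append_of_le_length (by omega)] at this
      rw [show s.length + (n - s.length + 1) = n + 1 by omega] at this
      rw [List.drop_left' (show ((y : List α) ++ [d]).length = n + 1 by simp [hn])] at this
      rw [show drop (n + 1) s = [] from List.drop_eq_nil_of_le (by omega), List.nil_append,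
        show n + 1 - s.length = n - s.length + 1 by omega] at this
      exact this
    · -- letter part
      have := congrArg (fun l => l[n]?) hst
      rw [show n = s.length + (n - s.length) by omega] at this
      rw [List.append_assoc, List.getElem?_append_right (by omega)] at this
      rw [show s.length + (n - s.length) - s.length = n - s.length by omega] at this
      rw [List.getElem?_append_left hk] at this
      rw [this]
      rw [show s.length + (n - s.length) = n by omega]
      rw [show (y ++ [d] ++ y) = y ++ ([d] ++ y) by simp [List.append_assoc]]
      rw [List.getElem?_append_right (by omega)]
      simp [hn]

lemma key (x y : List α) {p q r : ℕ} (hpq : p < q) (hqr : q < r)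
    (hq : Cross x y q) (hr : Cross x y r)
    (hp' : Cross x y p) : x[p]? = x[r]? := by
  obtain ⟨hrm, hrt, hrd⟩ := hr
  obtain ⟨hqm, hqt, hqd⟩ := hq
  obtain ⟨hpm, hpt, hpd⟩ := hp'
  have hsuf : x.take q <:+ x.take r :=
    suffix_of_suffix_length_le hqt hrt (by simp; omega)
  obtain ⟨u, hu⟩ := hsuf
  have hul : u.length = r - q := by
    have := congrArg List.length hu
    simp at this; omega
  have step1 : x[p]? = x[(r-q)+p]? := by
    calc x[p]? = (x.take q)[p]? := (List.getElem?_take_of_lt hpq).symm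
    _ = (u ++ x.take q)[u.length + p]? := by
        rw [List.getElem?_append_right (Nat.le_add_right _ _), Nat.add_sub_cancel_left]
    _ = (x.take r)[(r-q)+p]? := by rw [← hu, hul]
    _ = x[(r-q)+p]? := List.getElem?_take_of_lt (by omega)
  have hpre : x.drop (q+1) <+: x.drop (p+1) :=
    List.prefix_of_prefix_length_le hqd hpd (by simp; omega)
  obtain ⟨w, hw⟩ := hpre
  have step2 : x[(r-q)+p]? = x[r]? := by
    calc x[(r-q)+p]? = (x.drop (p+1))[r-q-1]? := by
          rw [List.getElem?_drop]; congr 1; omega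
    _ = (x.drop (q+1) ++ w)[r-q-1]? := by rw [hw]
    _ = (x.drop (q+1))[r-q-1]? := List.getElem?_append_left (by simp; omega)
    _ = x[r]? := by rw [List.getElem?_drop]; congr 1; omega
  rw [step1, step2]

end Stmt9Aux

theorem stmt_9 {α : Type} (a b c : α) (hab : a ≠ b) (hac : a ≠ c) (hbc : b ≠ c)
    (x y : List α)
    (h0 : x <:+: y ++ [a] ++ y) (h1 : x <:+: y ++ [b] ++ y) (h2 : x <:+: y ++ [c] ++ y) :
    x <:+: y := by
  by_contra hnot
  obtain ⟨p, hp, hpa⟩ := Stmt9Aux.crossing a x y h0 hnot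
  obtain ⟨q, hq, hqb⟩ := Stmt9Aux.crossing b x y h1 hnot
  obtain ⟨r, hr, hrc⟩ := Stmt9Aux.crossing c x y h2 hnot
  have hne_pq : p ≠ q := by rintro rfl; rw [hpa] at hqb; exact hab (Option.some.inj hqb)
  have hne_pr : p ≠ r := by rintro rfl; rw [hpa] at hrc; exact hac (Option.some.inj hrc)
  have hne_qr : q ≠ r := by rintro rfl; rw [hqb] at hrc; exact hbc (Option.some.inj hrc)
  rcases Nat.lt_trichotomy p q with h3 | h3 | h3
  · rcases Nat.lt_trichotomy q r with h4 | h4 | h4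
    · have := Stmt9Aux.key x y h3 h4 hq hr hp
      rw [hpa, hrc] at this; exact hac (Option.some.inj this)
    · exact hne_qr h4
    · rcases Nat.lt_trichotomy p r with h5 | h5 | h5
      · have := Stmt9Aux.key x y h5 h4 hr hq hp
        rw [hpa, hqb] at this; exact hab (Option.some.inj this)
      · exact hne_pr h5
      · have := Stmt9Aux.key x y h5 h3 hp hq hr
        rw [hrc, hqb] at this; exact hbc (Option.some.inj this).symm
  · exact hne_pq h3
  · rcases Nat.lt_trichotomy p r with h4 | h4 | h4
    · have := Stmt9Aux.key x y h3 h4 hp hr hq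
      rw [hqb, hrc] at this; exact hbc (Option.some.inj this)
    · exact hne_pr h4
    · rcases Nat.lt_trichotomy q r with h5 | h5 | h5
      · have := Stmt9Aux.key x y h5 h4 hr hp hq
        rw [hqb, hpa] at this; exact hab (Option.some.inj this).symm
      · exact hne_qr h5
      · have := Stmt9Aux.key x y h5 h3 hq hp hr
        rw [hrc, hpa] at this; exact hac (Option.some.inj this).symm
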